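/- For f ∈ C(X): f is a continuous affine function if and only if there exists a unique u ∈ X* such that the affine function h_{u,α}(x) = ⟨u,x⟩ + α satisfies h_{u,α} ≤ f for some α ∈ ℝ. -/

import Mathlib

open Set

noncomputable section

variable {X : Type*}

/-- The class of proper, lower semicontinuous, convex functions `X → ℝ ∪ {+∞}`,
encoded as `EReal`-valued functions never taking the value `⊥`. -/
def IsClFun (X : Type*) [NormedAddCommGroup X] [NormedSpace ℝ X] (f : X → EReal) : Prop :=
  (∀ x, f x ≠ ⊥) ∧ (∃ x, f x ≠ ⊤) ∧ LowerSemicontinuous f ∧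
  ∀ x y : X, ∀ a b : ℝ, 0 ≤ a → 0 ≤ b → a + b = 1 →
    f (a • x + b • y) ≤ (a : EReal) * f x + (b : EReal) * f y

/-- `C(X)`, as a subtype. -/
abbrev Cl (X : Type*) [NormedAddCommGroup X] [NormedSpace ℝ X] :=
  {f : X → EReal // IsClFun X f}

/-- The continuous affine function `h_{u,α}(x) = ⟨u,x⟩ + α`. -/
def aff [NormedAddCommGroup X] [NormedSpace ℝ X] (u : X →L[ℝ] ℝ) (α : ℝ) : X → EReal :=
  fun x => ((u x + α : ℝ) : EReal)

theorem affMem [NormedAddCommGroup X] [NormedSpace ℝ X] (u : X →L[ℝ] ℝ) (α : ℝ) :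
    IsClFun X (aff u α) := by
  refine ⟨fun x => EReal.coe_ne_bot _, ⟨0, EReal.coe_ne_top _⟩, ?_, ?_⟩
  · exact (continuous_coe_real_ereal.comp (by continuity)).lowerSemicontinuous
  · intro x y a b ha hb hab
    simp only [aff, map_add, map_smul, smul_eq_mul]
    rw [← EReal.coe_mul, ← EReal.coe_mul, ← EReal.coe_add, EReal.coe_le_coe_iff]
    have h : a * α + b * α = α := by rw [← add_mul, hab, one_mul]
    nlinarith

/-- `h_{u,α}` as an element of `C(X)`. -/
def affCl [NormedAddCommGroup X] [NormedSpace ℝ X] (u : X →L[ℝ] ℝ) (α : ℝ) : Cl X :=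
  ⟨aff u α, affMem u α⟩

/-- An operator on `C(X)` is fully order preserving if it is onto and
`f ≤ g ↔ T f ≤ T g` (pointwise order). -/
def FullyOrderPreserving [NormedAddCommGroup X] [NormedSpace ℝ X]
    (T : Cl X → Cl X) : Prop :=
  Function.Surjective T ∧ ∀ f g : Cl X, f.1 ≤ g.1 ↔ (T f).1 ≤ (T g).1

section Aux

variable [NormedAddCommGroup X] [NormedSpace ℝ X]
/-- separation -/
lemma sep_aux' {f : X → EReal}
    (hbot : ∀ x, f x ≠ ⊥) (hprop : ∃ x, f x ≠ ⊤) (hlsc : LowerSemicontinuous f)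
    (hconv : ∀ x y : X, ∀ a b : ℝ, 0 ≤ a → 0 ≤ b → a + b = 1 →
      f (a • x + b • y) ≤ (a : EReal) * f x + (b : EReal) * f y)
    (x0 : X) (t0 : ℝ) (h : (t0 : EReal) < f x0) :
    ∃ (v : X →L[ℝ] ℝ) (c u : ℝ), 0 ≤ c ∧ v x0 + c * t0 < u ∧
      ∀ x : X, ∀ t : ℝ, f x ≤ (t : EReal) → u < v x + c * t := by
  obtain ⟨x1, hx1⟩ := hprop
  set epi : Set (X × ℝ) := {p | f p.1 ≤ (p.2 : EReal)} with hepi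
  have hclosed : IsClosed epi := by
    have h1 := hlsc.isClosed_epigraph
    have hcont : Continuous fun p : X × ℝ => ((p.1, ((p.2 : ℝ) : EReal)) : X × EReal) :=
      continuous_fst.prodMk (continuous_coe_real_ereal.comp continuous_snd)
    exact h1.preimage hcont
  have hconvex : Convex ℝ epi := by
    rintro ⟨x, s⟩ hx ⟨y, t⟩ hy a b ha hb hab
    simp only [hepi, mem_setOf_eq] at hx hy
    show f (a • x + b • y) ≤ ((a • s + b • t : ℝ) : EReal)
    calc f (a • x + b • y) ≤ (a : EReal) * f x + (b : EReal) * f y :=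
          hconv x y a b ha hb hab
      _ ≤ (a : EReal) * (s : EReal) + (b : EReal) * (t : EReal) := by
          gcongr
      _ = ((a • s + b • t : ℝ) : EReal) := by
          rw [smul_eq_mul, smul_eq_mul]; norm_cast
  have hx0 : (x0, t0) ∉ epi := fun hc => absurd h (not_lt.2 hc)
  obtain ⟨φ, u, hφ1, hφ2⟩ := geometric_hahn_banach_point_closed hconvex hclosed hx0
  set v : X →L[ℝ] ℝ := φ.comp (ContinuousLinearMap.inl ℝ X ℝ) with hv
  set c : ℝ := φ (0, 1) with hc
  have hφ : ∀ (x : X) (t : ℝ), φ (x, t) = v x + c * t := by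
    intro x t
    have hxt : ((x, t) : X × ℝ) = (x, 0) + t • ((0 : X), (1 : ℝ)) := by
      simp [Prod.ext_iff]
    rw [hxt, map_add, map_smul, smul_eq_mul]
    simp [hv, hc, mul_comm]
  have hr1 : f x1 = (((f x1).toReal : ℝ) : EReal) := (EReal.coe_toReal hx1 (hbot x1)).symm
  have hcnn : 0 ≤ c := by
    by_contra hcn
    push_neg at hcn
    set r := (f x1).toReal
    set t := max r ((u - v x1) / c) with ht
    have hmem : (x1, t) ∈ epi := by
      show f x1 ≤ (t : EReal)
      rw [hr1]
      exact_mod_cast le_max_left _ _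
    have h2 := hφ2 (x1, t) hmem
    rw [hφ] at h2
    have hct : c * t ≤ u - v x1 := by
      have h3 : c * t ≤ c * ((u - v x1) / c) :=
        mul_le_mul_of_nonpos_left (le_max_right _ _) hcn.le
      rwa [mul_div_cancel₀ _ hcn.ne] at h3
    linarith
  refine ⟨v, c, u, hcnn, ?_, ?_⟩
  · have := hφ1
    rwa [hφ] at this
  · intro x t hxt
    have := hφ2 (x, t) hxt
    rwa [hφ] at this

lemma pos_case' {f : X → EReal} (hbot : ∀ x, f x ≠ ⊥) {v : X →L[ℝ] ℝ} {c u t0 : ℝ} {x0 : X}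
    (hc : 0 < c) (h1 : v x0 + c * t0 < u)
    (h2 : ∀ x : X, ∀ t : ℝ, f x ≤ (t : EReal) → u < v x + c * t) :
    ∃ (v' : X →L[ℝ] ℝ) (β : ℝ), (∀ x, aff v' β x ≤ f x) ∧ t0 < v' x0 + β := by
  refine ⟨-(c⁻¹ • v), u / c, ?_, ?_⟩
  · intro x
    by_cases hx : f x = ⊤
    · rw [hx]; exact le_top
    · have hfx : f x = (((f x).toReal : ℝ) : EReal) := (EReal.coe_toReal hx (hbot x)).symm
      have h3 := h2 x (f x).toReal hfx.le
      rw [hfx]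
      show (((-(c⁻¹ • v)) x + u / c : ℝ) : EReal) ≤ (((f x).toReal : ℝ) : EReal)
      rw [EReal.coe_le_coe_iff]
      simp only [ContinuousLinearMap.neg_apply, ContinuousLinearMap.smul_apply, smul_eq_mul]
      rw [div_eq_mul_inv]
      have h5 : c⁻¹ * (u - v x) ≤ c⁻¹ * (c * (f x).toReal) :=
        mul_le_mul_of_nonneg_left (by linarith) (inv_pos.2 hc).le
      rw [inv_mul_cancel_left₀ hc.ne'] at h5
      linarith
  · simp only [ContinuousLinearMap.neg_apply, ContinuousLinearMap.smul_apply, smul_eq_mul]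
    rw [div_eq_mul_inv]
    have h5 : c⁻¹ * (c * t0) < c⁻¹ * (u - v x0) :=
      mul_lt_mul_of_pos_left (by linarith) (inv_pos.2 hc)
    rw [inv_mul_cancel_left₀ hc.ne'] at h5
    linarith

lemma zero_case' {f : X → EReal} (hbot : ∀ x, f x ≠ ⊥)
    (hmin : ∃ (w : X →L[ℝ] ℝ) (γ : ℝ), ∀ x, aff w γ x ≤ f x)
    {v : X →L[ℝ] ℝ} {u t0 : ℝ} {x0 : X}
    (h1 : v x0 < u) (h2 : ∀ x : X, ∀ t : ℝ, f x ≤ (t : EReal) → u < v x) :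
    ∃ (v' : X →L[ℝ] ℝ) (β : ℝ), (∀ x, aff v' β x ≤ f x) ∧ t0 < v' x0 + β := by
  obtain ⟨w, γ, hw⟩ := hmin
  have hd : ∀ x, f x ≠ ⊤ → u < v x := fun x hx =>
    h2 x (f x).toReal (EReal.coe_toReal hx (hbot x)).ge
  have hdpos : 0 < u - v x0 := by linarith
  set lam := max 0 ((t0 + 1 - (w x0 + γ)) / (u - v x0)) with hlam
  have hlam0 : 0 ≤ lam := le_max_left _ _
  refine ⟨w - lam • v, γ + lam * u, ?_, ?_⟩
  · intro x
    by_cases hx : f x = ⊤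
    · rw [hx]; exact le_top
    · have h3 := hd x hx
      calc aff (w - lam • v) (γ + lam * u) x ≤ aff w γ x := by
            unfold aff
            rw [EReal.coe_le_coe_iff]
            simp only [ContinuousLinearMap.sub_apply, ContinuousLinearMap.smul_apply,
              smul_eq_mul]
            nlinarith
        _ ≤ f x := hw x
  · have hlam1 : (t0 + 1 - (w x0 + γ)) / (u - v x0) ≤ lam := le_max_right _ _
    have h4 : t0 + 1 - (w x0 + γ) ≤ lam * (u - v x0) := by
      rwa [div_le_iff₀ hdpos] at hlam1
    simp only [ContinuousLinearMap.sub_apply, ContinuousLinearMap.smul_apply, smul_eq_mul]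
    nlinarith

lemma exists_minorant' {f : X → EReal}
    (hbot : ∀ x, f x ≠ ⊥) (hprop : ∃ x, f x ≠ ⊤) (hlsc : LowerSemicontinuous f)
    (hconv : ∀ x y : X, ∀ a b : ℝ, 0 ≤ a → 0 ≤ b → a + b = 1 →
      f (a • x + b • y) ≤ (a : EReal) * f x + (b : EReal) * f y) :
    ∃ (w : X →L[ℝ] ℝ) (γ : ℝ), ∀ x, aff w γ x ≤ f x := by
  obtain ⟨x1, hx1⟩ := hprop
  set r := (f x1).toReal with hr
  have hr1 : f x1 = ((r : ℝ) : EReal) := (EReal.coe_toReal hx1 (hbot x1)).symm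
  have hlt : ((r - 1 : ℝ) : EReal) < f x1 := by
    rw [hr1]; exact_mod_cast sub_one_lt r
  obtain ⟨v, c, u, hcnn, h1, h2⟩ := sep_aux' hbot ⟨x1, hx1⟩ hlsc hconv x1 (r - 1) hlt
  rcases hcnn.eq_or_lt with hc0 | hcpos
  · exfalso
    have h3 := h2 x1 r hr1.le
    rw [← hc0] at h1 h3
    simp only [zero_mul, add_zero] at h1 h3
    linarith
  · obtain ⟨v', β, hmin, _⟩ := pos_case' hbot hcpos h1 h2
    exact ⟨v', β, hmin⟩

lemma minorant_above' {f : X → EReal}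
    (hbot : ∀ x, f x ≠ ⊥) (hprop : ∃ x, f x ≠ ⊤) (hlsc : LowerSemicontinuous f)
    (hconv : ∀ x y : X, ∀ a b : ℝ, 0 ≤ a → 0 ≤ b → a + b = 1 →
      f (a • x + b • y) ≤ (a : EReal) * f x + (b : EReal) * f y)
    (x0 : X) (t0 : ℝ) (h : (t0 : EReal) < f x0) :
    ∃ (v : X →L[ℝ] ℝ) (β : ℝ), (∀ x, aff v β x ≤ f x) ∧ t0 < v x0 + β := by
  obtain ⟨v, c, u, hcnn, h1, h2⟩ := sep_aux' hbot hprop hlsc hconv x0 t0 h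
  rcases hcnn.eq_or_lt with hc0 | hcpos
  · rw [← hc0] at h1 h2
    simp only [zero_mul, add_zero] at h1 h2
    exact zero_case' hbot (exists_minorant' hbot hprop hlsc hconv) h1 h2
  · exact pos_case' hbot hcpos h1 h2

end Aux

theorem affine_iff_unique_slope_minorant
    [NormedAddCommGroup X] [NormedSpace ℝ X] [CompleteSpace X]
    (f : Cl X) :
    (∃ (u : X →L[ℝ] ℝ) (α : ℝ), f.1 = aff u α) ↔
      (∃! u : X →L[ℝ] ℝ, ∃ α : ℝ, ∀ x, aff u α x ≤ f.1 x) := by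
  constructor
  · rintro ⟨u, α, hf⟩
    refine ⟨u, ⟨α, fun x => (congrFun hf x).ge⟩, ?_⟩
    rintro v ⟨β, hv⟩
    have key : ∀ x, v x + β ≤ u x + α := by
      intro x
      have h1 := hv x
      rw [hf] at h1
      exact EReal.coe_le_coe_iff.1 h1
    have hle : ∀ x, v x - u x ≤ α - β := fun x => by linarith [key x]
    have hzero : ∀ x, v x - u x ≤ 0 := by
      intro x
      by_contra hp
      push_neg at hp
      have h2 := hle (((α - β + 1) / (v x - u x)) • x)
      rw [map_smul, map_smul, smul_eq_mul, smul_eq_mul] at h2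
      have h3 : (α - β + 1) / (v x - u x) * (v x - u x) = α - β + 1 :=
        div_mul_cancel₀ _ hp.ne'
      nlinarith
    ext x
    have h1 := hzero x
    have h2 := hzero (-x)
    rw [map_neg, map_neg] at h2
    linarith
  · rintro ⟨u, ⟨α, hα⟩, huniq⟩
    obtain ⟨hbot, ⟨x1, hx1⟩, hlsc, hconv⟩ := f.2
    set S := (fun x => (f.1 x).toReal - u x) '' {x | f.1 x ≠ ⊤} with hS
    have hne : S.Nonempty := ⟨_, ⟨x1, hx1, rfl⟩⟩
    have hS_lb : ∀ r ∈ S, α ≤ r := by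
      rintro r ⟨x, hx, rfl⟩
      have h1 := hα x
      rw [show f.1 x = (((f.1 x).toReal : ℝ) : EReal) from (EReal.coe_toReal hx (hbot x)).symm]
        at h1
      have h2 := EReal.coe_le_coe_iff.1 h1
      simp only
      linarith
    have hbdd : BddBelow S := ⟨α, hS_lb⟩
    set β := sInf S with hβ
    refine ⟨u, β, funext fun x => le_antisymm ?_ ?_⟩
    · by_contra hc
      push_neg at hc
      obtain ⟨v, γ, hmin, hgt⟩ := minorant_above' hbot ⟨x1, hx1⟩ hlsc hconv x (u x + β) hc
      have hvu : v = u := huniq v ⟨γ, hmin⟩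
      rw [hvu] at hgt
      have hγβ : γ ≤ β := by
        refine le_csInf hne ?_
        rintro r ⟨y, hy, rfl⟩
        have h1 := hmin y
        rw [show f.1 y = (((f.1 y).toReal : ℝ) : EReal) from
          (EReal.coe_toReal hy (hbot y)).symm] at h1
        have h2 := EReal.coe_le_coe_iff.1 h1
        rw [hvu] at h2
        simp only
        linarith
      linarith
    · by_cases hx : f.1 x = ⊤
      · rw [hx]; exact le_top
      · have h1 : β ≤ (f.1 x).toReal - u x := csInf_le hbdd ⟨x, hx, rfl⟩
        rw [show f.1 x = (((f.1 x).toReal : ℝ) : EReal) from (EReal.coe_toReal hx (hbot x)).symm]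
        exact EReal.coe_le_coe_iff.2 (by linarith)
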